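/- Under assumptions: g convex and L-Lipschitz (|g(x) − g(y)| ≤ L‖x − y‖ for all x, y), M symmetric with M − αAᵀA positive semidefinite, and existence of a primal solution x⋆ with dual certificate u⋆ — the NCS iterates satisfy, for every k ≥ 0, g(Ax^{k+1} − b) − g(Ax⋆ − b) ≤ (1/(α√(k+1))) · ( ‖u⁰ − u⋆ − αA(x⁰ − x⋆)‖ + ‖u⋆‖ + L + ‖x⁰ − x⋆‖_{αM − α²AᵀA} )². -/

import Mathlib

open Matrix

-- Moore–Penrose pseudoinverse, characterized by the four Penrose conditions
-- (which determine it uniquely when a solution exists).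
open Classical in
noncomputable def mpInv {k l : ℕ} (A : Matrix (Fin k) (Fin l) ℝ) : Matrix (Fin l) (Fin k) ℝ :=
  if h : ∃ X : Matrix (Fin l) (Fin k) ℝ,
      A * X * A = A ∧ X * A * X = X ∧ (A * X)ᵀ = A * X ∧ (X * A)ᵀ = X * A
  then h.choose else 0

/-- Euclidean norm of a vector. -/
noncomputable def vnorm {m : ℕ} (v : Fin m → ℝ) : ℝ := Real.sqrt (v ⬝ᵥ v)

/-- Seminorm `‖x‖_P = √(xᵀ P x)` induced by a positive semidefinite matrix `P`. -/
noncomputable def pnorm {n : ℕ} (P : Matrix (Fin n) (Fin n) ℝ) (x : Fin n → ℝ) : ℝ :=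
  Real.sqrt (x ⬝ᵥ (P *ᵥ x))

-- `ProxRel g α z u'` says that `u' = prox_{αg*}(z)`, i.e. that
-- `α⁻¹ (z - u')` is a minimizer of `x ↦ g(x) + (α/2)‖x - z/α‖²`
-- (by Moreau's identity `prox_{αg*}(z) = z - α argmin_x {g(x) + (α/2)‖x - z/α‖²}`).
def ProxRel {m : ℕ} (g : (Fin m → ℝ) → ℝ) (α : ℝ) (z u' : Fin m → ℝ) : Prop :=
  IsMinOn (fun y : Fin m → ℝ => g y + (α / 2) * ((y - α⁻¹ • z) ⬝ᵥ (y - α⁻¹ • z)))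
    Set.univ (α⁻¹ • (z - u'))

/-! ### Auxiliary lemmas -/

lemma dot_nonneg' {m : ℕ} (v : Fin m → ℝ) : 0 ≤ v ⬝ᵥ v :=
  Finset.sum_nonneg fun _ _ => mul_self_nonneg _

lemma vnorm_nonneg' {m : ℕ} (v : Fin m → ℝ) : 0 ≤ vnorm v := Real.sqrt_nonneg _

lemma vnorm_sq' {m : ℕ} (v : Fin m → ℝ) : vnorm v ^ 2 = v ⬝ᵥ v :=
  Real.sq_sqrt (dot_nonneg' v)

lemma vnorm_neg' {m : ℕ} (v : Fin m → ℝ) : vnorm (-v) = vnorm v := by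
  rw [vnorm, vnorm, neg_dotProduct, dotProduct_neg, neg_neg]

lemma dot_flipA {k l : ℕ} (A : Matrix (Fin k) (Fin l) ℝ) (w : Fin k → ℝ) (v : Fin l → ℝ) :
    w ⬝ᵥ (A *ᵥ v) = (Aᵀ *ᵥ w) ⬝ᵥ v := by
  rw [Matrix.dotProduct_mulVec, ← Matrix.mulVec_transpose]

lemma dot_Msymm {k : ℕ} {M : Matrix (Fin k) (Fin k) ℝ} (hM : Mᵀ = M) (p q : Fin k → ℝ) :
    p ⬝ᵥ (M *ᵥ q) = q ⬝ᵥ (M *ᵥ p) := by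
  rw [dot_flipA, hM, dotProduct_comm]

lemma quad_cs {a b c : ℝ} (ha : 0 ≤ a) (hc : 0 ≤ c)
    (h : ∀ t : ℝ, 0 ≤ a + 2 * t * b + t ^ 2 * c) : b ^ 2 ≤ a * c := by
  rcases eq_or_lt_of_le hc with hc0 | hc0
  · have hb : b = 0 := by
      by_contra hb
      have key := h (-(a + 1) / (2 * b))
      rw [← hc0] at key
      have e : a + 2 * (-(a + 1) / (2 * b)) * b + (-(a + 1) / (2 * b)) ^ 2 * 0 = -1 := by
        field_simp
        ring
      rw [e] at key; linarith
    simp [hb]; positivity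
  · have key := h (-(b / c))
    have e : a + 2 * (-(b / c)) * b + (-(b / c)) ^ 2 * c = a - b ^ 2 / c := by
      field_simp
      ring
    rw [e] at key
    have h2 : b ^ 2 / c ≤ a := by linarith
    calc b ^ 2 = b ^ 2 / c * c := by field_simp
    _ ≤ a * c := mul_le_mul_of_nonneg_right h2 hc0.le

lemma dot_expand' {m : ℕ} (v w : Fin m → ℝ) (t : ℝ) :
    (v + t • w) ⬝ᵥ (v + t • w) = v ⬝ᵥ v + 2 * t * (v ⬝ᵥ w) + t ^ 2 * (w ⬝ᵥ w) := by
  simp only [dotProduct_add, add_dotProduct, dotProduct_smul, smul_dotProduct, smul_eq_mul,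
    dotProduct_comm w v]
  ring

lemma cs_dot {m : ℕ} (v w : Fin m → ℝ) : v ⬝ᵥ w ≤ vnorm v * vnorm w := by
  have h := quad_cs (dot_nonneg' v) (dot_nonneg' w) (fun t => by
    rw [← dot_expand']; exact dot_nonneg' _)
  have h2 : (v ⬝ᵥ w) ^ 2 ≤ (vnorm v * vnorm w) ^ 2 := by
    rw [mul_pow, vnorm_sq', vnorm_sq']; exact h
  nlinarith [mul_nonneg (vnorm_nonneg' v) (vnorm_nonneg' w)]

/-! ### Existence of the Moore–Penrose pseudoinverse of a real symmetric matrix -/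

lemma exists_penrose {n : ℕ} (M : Matrix (Fin n) (Fin n) ℝ) (hM : Mᵀ = M) :
    ∃ X : Matrix (Fin n) (Fin n) ℝ,
      M * X * M = M ∧ X * M * X = X ∧ (M * X)ᵀ = M * X ∧ (X * M)ᵀ = X * M := by
  have hHerm : M.IsHermitian := by
    rwa [Matrix.IsHermitian, Matrix.conjTranspose_eq_transpose_of_trivial]
  set U : Matrix (Fin n) (Fin n) ℝ :=
    (IsHermitian.eigenvectorUnitary hHerm : Matrix (Fin n) (Fin n) ℝ) with hUdef
  have hU1 : star U * U = 1 := Unitary.coe_star_mul_self _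
  set d : Fin n → ℝ := fun i => hHerm.eigenvalues i with hddef
  have hspec : M = U * diagonal d * star U := by
    have h := hHerm.spectral_theorem
    rw [Unitary.conjStarAlgAut_apply] at h
    exact h
  have key : ∀ e f : Fin n → ℝ,
      (U * diagonal e * star U) * (U * diagonal f * star U)
        = U * diagonal (fun i => e i * f i) * star U := by
    intro e f
    calc (U * diagonal e * star U) * (U * diagonal f * star U)
        = U * diagonal e * (star U * U) * (diagonal f * star U) := by
          simp only [Matrix.mul_assoc]
      _ = U * (diagonal e * diagonal f) * star U := by
          rw [hU1]; simp only [Matrix.mul_one, Matrix.mul_assoc]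
      _ = U * diagonal (fun i => e i * f i) * star U := by
          rw [diagonal_mul_diagonal]
  have hsym : ∀ e : Fin n → ℝ, (U * diagonal e * star U)ᵀ = U * diagonal e * star U := by
    intro e
    have hsU : star U = Uᵀ := by
      rw [Matrix.star_eq_conjTranspose, Matrix.conjTranspose_eq_transpose_of_trivial]
    rw [hsU, Matrix.transpose_mul, Matrix.transpose_mul, Matrix.transpose_transpose,
      Matrix.diagonal_transpose, Matrix.mul_assoc]
  refine ⟨U * diagonal (fun i => (d i)⁻¹) * star U, ?_, ?_, ?_, ?_⟩
  · rw [hspec, key, key]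
    congr 2
    funext i
    by_cases h : d i = 0 <;> field_simp [h]
  · rw [hspec, key, key]
    congr 2
    funext i
    by_cases h : d i = 0 <;> field_simp [h]
  · rw [hspec, key]; exact hsym _
  · rw [hspec, key]; exact hsym _

lemma mpInv_key {m n : ℕ} (A : Matrix (Fin m) (Fin n) ℝ) (M : Matrix (Fin n) (Fin n) ℝ)
    (hM : Mᵀ = M) (α : ℝ) (hα : 0 < α) (hpsd : (M - α • (Aᵀ * A)).PosSemidef)
    (v : Fin m → ℝ) : M *ᵥ (mpInv M *ᵥ (Aᵀ *ᵥ v)) = Aᵀ *ᵥ v := by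
  have hker : ∀ q : Fin n → ℝ, M *ᵥ q = 0 → A *ᵥ q = 0 := by
    intro q hq
    have h0 := hpsd.dotProduct_mulVec_nonneg q
    rw [star_trivial] at h0
    rw [Matrix.sub_mulVec, Matrix.smul_mulVec, dotProduct_sub, dotProduct_smul,
      smul_eq_mul, hq, dotProduct_zero, ← Matrix.mulVec_mulVec, dot_flipA Aᵀ,
      Matrix.transpose_transpose] at h0
    have h1 : (A *ᵥ q) ⬝ᵥ (A *ᵥ q) ≤ 0 := by nlinarith
    have h2 : (A *ᵥ q) ⬝ᵥ (A *ᵥ q) = 0 := le_antisymm h1 (dot_nonneg' _)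
    exact dotProduct_self_eq_zero.mp h2
  have hex := exists_penrose M hM
  have hmp : mpInv M = hex.choose := by rw [mpInv, dif_pos hex]
  obtain ⟨h1, h2, h3, h4⟩ := hex.choose_spec
  set X := hex.choose with hX
  have hMP : M * (M * X) = M := by
    have h5 := congrArg Matrix.transpose h1
    rw [Matrix.transpose_mul, h3, hM] at h5
    exact h5
  rw [hmp]
  set w := Aᵀ *ᵥ v with hw
  set q := w - (M * X) *ᵥ w with hq
  have hMq : M *ᵥ q = 0 := by
    rw [hq, Matrix.mulVec_sub, Matrix.mulVec_mulVec w M (M * X), hMP, sub_self]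
  have hAq := hker q hMq
  have hPq : (M * X) *ᵥ q = 0 := by
    conv_lhs => rw [← h3]
    rw [Matrix.transpose_mul, ← Matrix.mulVec_mulVec, hM, hMq, Matrix.mulVec_zero]
  have hq0 : q ⬝ᵥ q = 0 := by
    have e1 : w ⬝ᵥ q = 0 := by
      rw [hw, ← dot_flipA A v q, hAq, dotProduct_zero]
    have e2 : ((M * X) *ᵥ w) ⬝ᵥ q = 0 := by
      rw [dotProduct_comm, dot_flipA, h3, hPq, zero_dotProduct]
    rw [hq, sub_dotProduct]
    rw [hq] at e1 e2
    linarith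
  have hqz : q = 0 := dotProduct_self_eq_zero.mp hq0
  have hfinal : (M * X) *ᵥ w = w := by
    have h6 : w - (M * X) *ᵥ w = 0 := by rw [← hq, hqz]
    have h7 := sub_eq_zero.mp h6
    exact h7.symm
  rw [Matrix.mulVec_mulVec w M X, hfinal]

/-! ### Subgradient inequality from the prox relation -/

lemma prox_subgrad {m : ℕ} {g : (Fin m → ℝ) → ℝ} (hg : ConvexOn ℝ Set.univ g)
    {α : ℝ} (hα : 0 < α) {z u' : Fin m → ℝ} (h : ProxRel g α z u') (yy : Fin m → ℝ) :
    g (α⁻¹ • (z - u')) + u' ⬝ᵥ (yy - α⁻¹ • (z - u')) ≤ g yy := by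
  set yh : Fin m → ℝ := α⁻¹ • (z - u') with hyh
  set c : Fin m → ℝ := α⁻¹ • z with hc
  set Δ : Fin m → ℝ := yy - yh with hΔ
  have hyc : yh - c = -(α⁻¹ • u') := by
    rw [hyh, hc, smul_sub]; abel
  have key : ∀ t : ℝ, 0 < t → t ≤ 1 →
      u' ⬝ᵥ Δ ≤ g yy - g yh + α / 2 * t * (Δ ⬝ᵥ Δ) := by
    intro t ht ht1
    have hmin := isMinOn_iff.mp h (yh + t • Δ) (Set.mem_univ _)
    have hconv : g (yh + t • Δ) ≤ (1 - t) * g yh + t * g yy := by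
      have h2 := hg.2 (Set.mem_univ yh) (Set.mem_univ yy) (by linarith : (0:ℝ) ≤ 1 - t)
        ht.le (by ring)
      have e : (1 - t) • yh + t • yy = yh + t • Δ := by
        rw [hΔ, smul_sub, sub_smul, one_smul]; abel
      rw [e] at h2
      simpa using h2
    have hquad : (yh + t • Δ - c) ⬝ᵥ (yh + t • Δ - c)
        = (yh - c) ⬝ᵥ (yh - c) + 2 * t * ((yh - c) ⬝ᵥ Δ) + t ^ 2 * (Δ ⬝ᵥ Δ) := by
      have e : yh + t • Δ - c = (yh - c) + t • Δ := by abel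
      rw [e, dot_expand']
    have hB : α * ((yh - c) ⬝ᵥ Δ) = -(u' ⬝ᵥ Δ) := by
      rw [hyc]
      simp only [neg_dotProduct, smul_dotProduct, smul_eq_mul]
      field_simp
    rw [← hyh, ← hc] at hmin
    simp only [hquad] at hmin
    have hd := dot_nonneg' Δ
    nlinarith [hmin, hconv]
  have hfin : ∀ ε : ℝ, 0 < ε → g yh + u' ⬝ᵥ Δ ≤ g yy + ε := by
    intro ε hε
    set D : ℝ := α / 2 * (Δ ⬝ᵥ Δ) with hD
    have hD0 : 0 ≤ D := by
      have := dot_nonneg' Δ; positivity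
    set t : ℝ := min 1 (ε / (D + 1)) with htdef
    have ht : 0 < t := lt_min one_pos (div_pos hε (by linarith))
    have ht1 : t ≤ 1 := min_le_left _ _
    have h2 := key t ht ht1
    have h3 : α / 2 * t * (Δ ⬝ᵥ Δ) = t * D := by rw [hD]; ring
    have h4 : t * D ≤ ε := by
      have h5 : t ≤ ε / (D + 1) := min_le_right _ _
      have h6 : t * D ≤ ε / (D + 1) * D := mul_le_mul_of_nonneg_right h5 hD0
      have h7 : ε / (D + 1) * D ≤ ε := by
        rw [div_mul_eq_mul_div, div_le_iff₀ (by linarith : (0:ℝ) < D + 1)]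
        nlinarith
      linarith
    rw [h3] at h2
    linarith
  have := le_of_forall_pos_le_add hfin
  linarith

/-! ### The quadratic and bilinear forms of the PPA metric -/

noncomputable def Hq {m n : ℕ} (A : Matrix (Fin m) (Fin n) ℝ) (M : Matrix (Fin n) (Fin n) ℝ)
    (α : ℝ) (p : Fin n → ℝ) (q : Fin m → ℝ) : ℝ :=
  p ⬝ᵥ (M *ᵥ p) - 2 * (q ⬝ᵥ (A *ᵥ p)) + α⁻¹ * (q ⬝ᵥ q)

noncomputable def Hb {m n : ℕ} (A : Matrix (Fin m) (Fin n) ℝ) (M : Matrix (Fin n) (Fin n) ℝ)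
    (α : ℝ) (p p' : Fin n → ℝ) (q q' : Fin m → ℝ) : ℝ :=
  p ⬝ᵥ (M *ᵥ p') - q ⬝ᵥ (A *ᵥ p') - q' ⬝ᵥ (A *ᵥ p) + α⁻¹ * (q ⬝ᵥ q')

lemma Hq_decomp {m n : ℕ} (A : Matrix (Fin m) (Fin n) ℝ) (M : Matrix (Fin n) (Fin n) ℝ)
    (α : ℝ) (hα : 0 < α) (p : Fin n → ℝ) (q : Fin m → ℝ) :
    Hq A M α p q = α⁻¹ * ((q - α • (A *ᵥ p)) ⬝ᵥ (q - α • (A *ᵥ p)))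
      + p ⬝ᵥ ((M - α • (Aᵀ * A)) *ᵥ p) := by
  have h1 : (A *ᵥ p) ⬝ᵥ (A *ᵥ p) = p ⬝ᵥ ((Aᵀ * A) *ᵥ p) := by
    rw [← Matrix.mulVec_mulVec, dot_flipA A (A *ᵥ p) p, dotProduct_comm]
  have hne : α ≠ 0 := hα.ne'
  simp only [Hq, dotProduct_sub, sub_dotProduct, dotProduct_smul, smul_dotProduct,
    smul_eq_mul, Matrix.sub_mulVec, Matrix.smul_mulVec,
    dotProduct_comm (α • (A *ᵥ p)) q]
  field_simp
  ring_nf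
  nlinarith [h1, sq_nonneg α]

lemma Hq_nonneg {m n : ℕ} (A : Matrix (Fin m) (Fin n) ℝ) (M : Matrix (Fin n) (Fin n) ℝ)
    (α : ℝ) (hα : 0 < α) (hpsd : (M - α • (Aᵀ * A)).PosSemidef)
    (p : Fin n → ℝ) (q : Fin m → ℝ) : 0 ≤ Hq A M α p q := by
  rw [Hq_decomp A M α hα]
  have h1 := hpsd.dotProduct_mulVec_nonneg p
  rw [star_trivial] at h1
  have h2 := dot_nonneg' (q - α • (A *ᵥ p))
  have : (0:ℝ) ≤ α⁻¹ := by positivity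
  positivity

lemma Hq_expand {m n : ℕ} (A : Matrix (Fin m) (Fin n) ℝ) (M : Matrix (Fin n) (Fin n) ℝ)
    (α : ℝ) (hM : Mᵀ = M) (p p' : Fin n → ℝ) (q q' : Fin m → ℝ) (t : ℝ) :
    Hq A M α (p + t • p') (q + t • q')
      = Hq A M α p q + 2 * t * Hb A M α p p' q q' + t ^ 2 * Hq A M α p' q' := by
  simp only [Hq, Hb, Matrix.mulVec_add, Matrix.mulVec_smul, dotProduct_add, add_dotProduct,
    dotProduct_smul, smul_dotProduct, smul_eq_mul]
  linear_combination (t : ℝ) * dot_Msymm hM p' p + t * α⁻¹ * dotProduct_comm q' q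

lemma Hb_symm {m n : ℕ} (A : Matrix (Fin m) (Fin n) ℝ) (M : Matrix (Fin n) (Fin n) ℝ)
    (α : ℝ) (hM : Mᵀ = M) (p p' : Fin n → ℝ) (q q' : Fin m → ℝ) :
    Hb A M α p p' q q' = Hb A M α p' p q' q := by
  simp only [Hb]
  linear_combination dot_Msymm hM p p' + α⁻¹ * dotProduct_comm q q'

lemma Hb_cs {m n : ℕ} (A : Matrix (Fin m) (Fin n) ℝ) (M : Matrix (Fin n) (Fin n) ℝ)
    (α : ℝ) (hα : 0 < α) (hM : Mᵀ = M) (hpsd : (M - α • (Aᵀ * A)).PosSemidef)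
    (p p' : Fin n → ℝ) (q q' : Fin m → ℝ) :
    Hb A M α p p' q q' ≤ Real.sqrt (Hq A M α p q) * Real.sqrt (Hq A M α p' q') := by
  have h := quad_cs (Hq_nonneg A M α hα hpsd p q) (Hq_nonneg A M α hα hpsd p' q')
    (fun t => by rw [← Hq_expand A M α hM]; exact Hq_nonneg A M α hα hpsd _ _)
  have h2 : (Hb A M α p p' q q') ^ 2
      ≤ (Real.sqrt (Hq A M α p q) * Real.sqrt (Hq A M α p' q')) ^ 2 := by
    rw [mul_pow, Real.sq_sqrt (Hq_nonneg A M α hα hpsd p q),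
      Real.sq_sqrt (Hq_nonneg A M α hα hpsd p' q')]
    exact h
  nlinarith [mul_nonneg (Real.sqrt_nonneg (Hq A M α p q)) (Real.sqrt_nonneg (Hq A M α p' q'))]

set_option maxHeartbeats 2000000 in
theorem ncs_rate
    {m n : ℕ}
    (A : Matrix (Fin m) (Fin n) ℝ) (b : Fin m → ℝ)
    (α : ℝ) (hα : 0 < α)
    (g : (Fin m → ℝ) → ℝ) (hg : ConvexOn ℝ Set.univ g)
    (L : ℝ) (hLip : ∀ v w : Fin m → ℝ, |g v - g w| ≤ L * vnorm (v - w))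
    (M : Matrix (Fin n) (Fin n) ℝ) (hMsymm : Mᵀ = M)
    (hMpsd : (M - α • (Aᵀ * A)).PosSemidef)
    -- NCS iterates:
    (x : ℕ → Fin n → ℝ) (u : ℕ → Fin m → ℝ)
    (hx : ∀ k, x (k + 1) = x k - mpInv M *ᵥ (Aᵀ *ᵥ u k))
    (hu : ∀ k, ProxRel g α
      (u k + α • (A *ᵥ ((2 : ℝ) • x (k + 1) - x k) - b)) (u (k + 1)))
    -- a primal solution x⋆ together with a dual certificate u⋆:
    (xs : Fin n → ℝ) (us : Fin m → ℝ)
    (hxs : ∀ y, g (A *ᵥ xs - b) ≤ g (A *ᵥ y - b))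
    (hus : Aᵀ *ᵥ us = 0)
    (hsub : ∀ y, g (A *ᵥ xs - b) + us ⬝ᵥ (y - (A *ᵥ xs - b)) ≤ g y) :
    ∀ k : ℕ,
      g (A *ᵥ x (k + 1) - b) - g (A *ᵥ xs - b) ≤
        (1 / (α * Real.sqrt (k + 1))) *
          (vnorm (u 0 - us - α • (A *ᵥ (x 0 - xs))) + vnorm us + L +
            pnorm (α • M - α ^ 2 • (Aᵀ * A)) (x 0 - xs)) ^ 2 := by
  intro k
  -- degenerate case m = 0
  rcases Nat.eq_zero_or_pos m with hm0 | hm0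
  · subst hm0
    have hv : A *ᵥ x (k + 1) - b = A *ᵥ xs - b := by
      funext i; exact i.elim0
    rw [hv, sub_self]
    have h1 : 0 ≤ 1 / (α * Real.sqrt (k + 1)) :=
      div_nonneg zero_le_one (mul_nonneg hα.le (Real.sqrt_nonneg _))
    exact mul_nonneg h1 (sq_nonneg _)
  -- L is nonnegative
  have hL : 0 ≤ L := by
    have h1 := hLip (Pi.single ⟨0, hm0⟩ 1) 0
    have h2 : vnorm ((Pi.single (⟨0, hm0⟩ : Fin m) (1:ℝ)) - 0) = 1 := by
      rw [sub_zero, vnorm]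
      have h3 : (Pi.single (⟨0, hm0⟩ : Fin m) (1:ℝ)) ⬝ᵥ (Pi.single ⟨0, hm0⟩ 1) = 1 := by
        rw [dotProduct_single]
        simp
      rw [h3, Real.sqrt_one]
    rw [h2, mul_one] at h1
    exact le_trans (abs_nonneg _) h1
  -- the step identity for the x-update
  have hstep : ∀ j, M *ᵥ (x j - x (j + 1)) = Aᵀ *ᵥ u j := by
    intro j
    rw [hx j, sub_sub_cancel]
    exact mpInv_key A M hMsymm α hα hMpsd (u j)
  -- the subgradient points
  set Y : ℕ → Fin m → ℝ :=
    fun j => A *ᵥ x (j + 1) - b + (α⁻¹ • (u j - u (j + 1)) - A *ᵥ (x j - x (j + 1))) with hYdef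
  have hYeq : ∀ j, α⁻¹ • (u j + α • (A *ᵥ ((2 : ℝ) • x (j + 1) - x j) - b) - u (j + 1)) = Y j := by
    intro j
    funext i
    have hne : α ≠ 0 := hα.ne'
    simp only [hYdef, Matrix.mulVec_sub, Matrix.mulVec_smul, Pi.smul_apply, Pi.add_apply,
      Pi.sub_apply, smul_eq_mul]
    field_simp
    ring
  have hsubg : ∀ j y, g (Y j) + u (j + 1) ⬝ᵥ (y - Y j) ≤ g y := by
    intro j y
    have h1 := prox_subgrad hg hα (hu j) y
    rwa [hYeq j] at h1
  -- subgradients are bounded by the Lipschitz constant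
  have hudot : ∀ j (s : Fin m → ℝ), u (j + 1) ⬝ᵥ s ≤ L * vnorm s := by
    intro j s
    have h1 := hsubg j (Y j + s)
    rw [add_sub_cancel_left] at h1
    have h2 := hLip (Y j + s) (Y j)
    rw [add_sub_cancel_left] at h2
    have h3 := le_abs_self (g (Y j + s) - g (Y j))
    linarith
  -- nonnegativity of the forms
  have hρ0 : ∀ j, 0 ≤ Hq A M α (x j - x (j + 1)) (u j - u (j + 1)) :=
    fun j => Hq_nonneg A M α hα hMpsd _ _
  have hσ0 : ∀ j, 0 ≤ Hq A M α (x j - xs) (u j - us) :=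
    fun j => Hq_nonneg A M α hα hMpsd _ _
  -- the key cross-term identity
  have hE : ∀ j, Hb A M α (x j - x (j + 1)) (x (j + 1) - xs) (u j - u (j + 1)) (u (j + 1) - us)
      = (u (j + 1) - us) ⬝ᵥ (Y j - (A *ᵥ xs - b)) := by
    intro j
    have e1 : (x j - x (j + 1)) ⬝ᵥ (M *ᵥ (x (j + 1) - xs))
        = u j ⬝ᵥ (A *ᵥ (x (j + 1) - xs)) := by
      rw [dot_Msymm hMsymm, hstep j, dot_flipA Aᵀ, Matrix.transpose_transpose, dotProduct_comm]
    have e2 : us ⬝ᵥ (A *ᵥ (x (j + 1) - xs)) = 0 := by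
      rw [dot_flipA, hus, zero_dotProduct]
    simp only [Hb, hYdef]
    rw [e1]
    simp only [Matrix.mulVec_sub, dotProduct_sub, sub_dotProduct, dotProduct_add, add_dotProduct,
      dotProduct_smul, smul_dotProduct, smul_eq_mul]
    simp only [Matrix.mulVec_sub, dotProduct_sub, sub_dotProduct] at e2
    linear_combination e2
      + dotProduct_comm (u j) (u (j + 1)) * α⁻¹
      + dotProduct_comm (u j) (A *ᵥ x (j + 1))
      + dotProduct_comm (u (j + 1)) us * α⁻¹
      + dotProduct_comm (A *ᵥ x (j + 1)) (u j)
      + dotProduct_comm us (u j) * α⁻¹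
  -- the cross term is nonnegative
  have hEnn : ∀ j, 0 ≤ (u (j + 1) - us) ⬝ᵥ (Y j - (A *ᵥ xs - b)) := by
    intro j
    have h1 := hsubg j (A *ᵥ xs - b)
    have h2 := hsub (Y j)
    have e5 : u (j + 1) ⬝ᵥ (A *ᵥ xs - b - Y j) = -(u (j + 1) ⬝ᵥ (Y j - (A *ᵥ xs - b))) := by
      rw [← dotProduct_neg, neg_sub]
    rw [sub_dotProduct]
    rw [e5] at h1
    linarith
  -- Fejér monotonicity
  have hfejer : ∀ j, Hq A M α (x (j + 1) - xs) (u (j + 1) - us)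
      + Hq A M α (x j - x (j + 1)) (u j - u (j + 1)) ≤ Hq A M α (x j - xs) (u j - us) := by
    intro j
    have hexp := Hq_expand A M α hMsymm (x (j + 1) - xs) (x j - x (j + 1))
      (u (j + 1) - us) (u j - u (j + 1)) 1
    simp only [one_smul, one_pow] at hexp
    have e3 : x (j + 1) - xs + (x j - x (j + 1)) = x j - xs := by abel
    have e4 : u (j + 1) - us + (u j - u (j + 1)) = u j - us := by abel
    rw [e3, e4] at hexp
    have hbs := Hb_symm A M α hMsymm (x (j + 1) - xs) (x j - x (j + 1))
      (u (j + 1) - us) (u j - u (j + 1))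
    have hnn := hEnn j
    rw [← hE j] at hnn
    linarith
  -- the second cross-term identity
  have hG : ∀ j, Hb A M α (x j - x (j + 1)) (x (j + 1) - x (j + 2))
        (u j - u (j + 1)) (u (j + 1) - u (j + 2))
      - Hq A M α (x (j + 1) - x (j + 2)) (u (j + 1) - u (j + 2))
      = (u (j + 1) - u (j + 2)) ⬝ᵥ (Y j - Y (j + 1)) := by
    intro j
    have e0 : M *ᵥ (x (j + 1) - x (j + 2)) = Aᵀ *ᵥ u (j + 1) := hstep (j + 1)
    have e1 : (x j - x (j + 1)) ⬝ᵥ (M *ᵥ (x (j + 1) - x (j + 2)))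
        = u (j + 1) ⬝ᵥ (A *ᵥ (x j - x (j + 1))) := by
      rw [e0, dot_flipA Aᵀ, Matrix.transpose_transpose, dotProduct_comm, dot_flipA A]
    have e2 : (x (j + 1) - x (j + 2)) ⬝ᵥ (M *ᵥ (x (j + 1) - x (j + 2)))
        = u (j + 1) ⬝ᵥ (A *ᵥ (x (j + 1) - x (j + 2))) := by
      rw [e0, dot_flipA Aᵀ, Matrix.transpose_transpose, dotProduct_comm, dot_flipA A]
    have e3 : u (j + 1) ⬝ᵥ (A *ᵥ (x j - x (j + 1))) = u j ⬝ᵥ (A *ᵥ (x (j + 1) - x (j + 2))) := by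
      rw [← e1, dot_Msymm hMsymm, hstep j, dot_flipA Aᵀ, Matrix.transpose_transpose,
        dotProduct_comm]
    simp only [Hb, Hq, hYdef]
    rw [e1, e2]
    simp only [Matrix.mulVec_sub, dotProduct_sub, sub_dotProduct] at e3
    simp only [Matrix.mulVec_sub, dotProduct_sub, sub_dotProduct, dotProduct_add, add_dotProduct,
      dotProduct_smul, smul_dotProduct, smul_eq_mul]
    linear_combination e3 + α⁻¹ * dotProduct_comm (u j) (u (j + 1))
      + α⁻¹ * dotProduct_comm (u (j + 1)) (u (j + 2)) + α⁻¹ * dotProduct_comm (u (j + 2)) (u j)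
  -- monotone decrease of the residual
  have hρmono : ∀ j, Hq A M α (x (j + 1) - x (j + 2)) (u (j + 1) - u (j + 2))
      ≤ Hq A M α (x j - x (j + 1)) (u j - u (j + 1)) := by
    intro j
    have hnn : 0 ≤ (u (j + 1) - u (j + 2)) ⬝ᵥ (Y j - Y (j + 1)) := by
      have h1 := hsubg j (Y (j + 1))
      have h2 : g (Y (j + 1)) + u (j + 2) ⬝ᵥ (Y j - Y (j + 1)) ≤ g (Y j) := hsubg (j + 1) (Y j)
      have e5 : u (j + 1) ⬝ᵥ (Y (j + 1) - Y j) = -(u (j + 1) ⬝ᵥ (Y j - Y (j + 1))) := by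
        rw [← dotProduct_neg, neg_sub]
      rw [e5] at h1
      rw [sub_dotProduct]
      linarith
    have hGj := hG j
    have hcs := Hb_cs A M α hα hMsymm hMpsd (x j - x (j + 1)) (x (j + 1) - x (j + 2))
      (u j - u (j + 1)) (u (j + 1) - u (j + 2))
    have h3 : Hq A M α (x (j + 1) - x (j + 2)) (u (j + 1) - u (j + 2))
        ≤ Real.sqrt (Hq A M α (x j - x (j + 1)) (u j - u (j + 1)))
          * Real.sqrt (Hq A M α (x (j + 1) - x (j + 2)) (u (j + 1) - u (j + 2))) := by
      linarith
    nlinarith [Real.sq_sqrt (hρ0 j), Real.sq_sqrt (hρ0 (j + 1)),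
      Real.sqrt_nonneg (Hq A M α (x j - x (j + 1)) (u j - u (j + 1))),
      Real.sqrt_nonneg (Hq A M α (x (j + 1) - x (j + 2)) (u (j + 1) - u (j + 2))), h3]
  have hρle : ∀ i j : ℕ, i ≤ j → Hq A M α (x j - x (j + 1)) (u j - u (j + 1))
      ≤ Hq A M α (x i - x (i + 1)) (u i - u (i + 1)) := by
    intro i j h
    induction j, h using Nat.le_induction with
    | base => exact le_refl _
    | succ j hj ih => exact le_trans (hρmono j) ih
  -- telescoping sum
  have hsum : ∀ K : ℕ,
      (∑ j ∈ Finset.range (K + 1), Hq A M α (x j - x (j + 1)) (u j - u (j + 1)))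
        + Hq A M α (x (K + 1) - xs) (u (K + 1) - us) ≤ Hq A M α (x 0 - xs) (u 0 - us) := by
    intro K
    induction K with
    | zero =>
        have := hfejer 0
        simp only [zero_add, Finset.sum_range_one]
        linarith
    | succ K ih =>
        have := hfejer (K + 1)
        rw [Finset.sum_range_succ]
        linarith
  have hkey : ((k : ℝ) + 1) * Hq A M α (x k - x (k + 1)) (u k - u (k + 1))
      ≤ Hq A M α (x 0 - xs) (u 0 - us) := by
    have h1 : ∀ j ∈ Finset.range (k + 1),
        Hq A M α (x k - x (k + 1)) (u k - u (k + 1))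
          ≤ Hq A M α (x j - x (j + 1)) (u j - u (j + 1)) := by
      intro j hj
      exact hρle j k (Nat.lt_succ_iff.mp (Finset.mem_range.mp hj))
    have h2 := Finset.card_nsmul_le_sum (Finset.range (k + 1))
      (fun j => Hq A M α (x j - x (j + 1)) (u j - u (j + 1)))
      (Hq A M α (x k - x (k + 1)) (u k - u (k + 1))) h1
    rw [Finset.card_range, nsmul_eq_mul] at h2
    push_cast at h2
    have h3 := hsum k
    have h4 := hσ0 (k + 1)
    linarith
  -- the error vector E_k
  set Ek : Fin m → ℝ := α⁻¹ • (u k - u (k + 1)) - A *ᵥ (x k - x (k + 1)) with hEkdef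
  have hlip2 : g (A *ᵥ x (k + 1) - b) - g (Y k) ≤ L * vnorm Ek := by
    have h1 := hLip (A *ᵥ x (k + 1) - b) (Y k)
    have e : A *ᵥ x (k + 1) - b - Y k = -Ek := by
      simp only [hYdef, hEkdef]; abel
    rw [e, vnorm_neg'] at h1
    exact le_trans (le_abs_self _) h1
  have hYb : g (Y k) - g (A *ᵥ xs - b) ≤ u (k + 1) ⬝ᵥ (Y k - (A *ᵥ xs - b)) := by
    have h1 := hsubg k (A *ᵥ xs - b)
    have e5 : u (k + 1) ⬝ᵥ (A *ᵥ xs - b - Y k) = -(u (k + 1) ⬝ᵥ (Y k - (A *ᵥ xs - b))) := by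
      rw [← dotProduct_neg, neg_sub]
    rw [e5] at h1
    linarith
  have hsplit : u (k + 1) ⬝ᵥ (Y k - (A *ᵥ xs - b))
      = Hb A M α (x k - x (k + 1)) (x (k + 1) - xs) (u k - u (k + 1)) (u (k + 1) - us)
        + us ⬝ᵥ Ek := by
    have e6 : Y k - (A *ᵥ xs - b) = A *ᵥ (x (k + 1) - xs) + Ek := by
      simp only [hYdef, hEkdef, Matrix.mulVec_sub]; abel
    have e2 : us ⬝ᵥ (A *ᵥ (x (k + 1) - xs)) = 0 := by
      rw [dot_flipA, hus, zero_dotProduct]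
    have e7 : us ⬝ᵥ (Y k - (A *ᵥ xs - b)) = us ⬝ᵥ Ek := by
      rw [e6, dotProduct_add, e2, zero_add]
    rw [hE k, ← e7, sub_dotProduct]
    ring
  have f1 : g (A *ᵥ x (k + 1) - b) - g (A *ᵥ xs - b)
      ≤ L * vnorm Ek
        + Real.sqrt (Hq A M α (x k - x (k + 1)) (u k - u (k + 1)))
          * Real.sqrt (Hq A M α (x (k + 1) - xs) (u (k + 1) - us))
        + vnorm us * vnorm Ek := by
    have hcs2 := Hb_cs A M α hα hMsymm hMpsd (x k - x (k + 1)) (x (k + 1) - xs)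
      (u k - u (k + 1)) (u (k + 1) - us)
    have husE := cs_dot us Ek
    linarith [hlip2, hYb, hsplit, hcs2, husE]
  have f2 : vnorm Ek * Real.sqrt α
      ≤ Real.sqrt (Hq A M α (x k - x (k + 1)) (u k - u (k + 1))) := by
    have hwE : Ek = α⁻¹ • ((u k - u (k + 1)) - α • (A *ᵥ (x k - x (k + 1)))) := by
      have hne : α ≠ 0 := hα.ne'
      funext i
      simp only [hEkdef, Pi.smul_apply, Pi.sub_apply, smul_eq_mul]
      field_simp
    have hEdot : Ek ⬝ᵥ Ek * α
        = α⁻¹ * (((u k - u (k + 1)) - α • (A *ᵥ (x k - x (k + 1))))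
            ⬝ᵥ ((u k - u (k + 1)) - α • (A *ᵥ (x k - x (k + 1))))) := by
      rw [hwE, smul_dotProduct, dotProduct_smul, smul_eq_mul, smul_eq_mul]
      field_simp
    have hq1 := Hq_decomp A M α hα (x k - x (k + 1)) (u k - u (k + 1))
    have hpsd1 := hMpsd.dotProduct_mulVec_nonneg (x k - x (k + 1))
    rw [star_trivial] at hpsd1
    have h8 : Ek ⬝ᵥ Ek * α ≤ Hq A M α (x k - x (k + 1)) (u k - u (k + 1)) := by
      rw [hEdot]; linarith
    have h9 := Real.sqrt_le_sqrt h8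
    rw [Real.sqrt_mul (dot_nonneg' Ek)] at h9
    exact h9
  have f4 : Real.sqrt (Hq A M α (x k - x (k + 1)) (u k - u (k + 1)))
        * Real.sqrt ((k : ℝ) + 1)
      ≤ Real.sqrt (Hq A M α (x 0 - xs) (u 0 - us)) := by
    have h10 : Hq A M α (x k - x (k + 1)) (u k - u (k + 1)) * ((k : ℝ) + 1)
        ≤ Hq A M α (x 0 - xs) (u 0 - us) := by
      have := hkey; linarith [hkey]
    have h11 := Real.sqrt_le_sqrt h10
    rwa [Real.sqrt_mul (hρ0 k)] at h11
  have f3 : Real.sqrt (Hq A M α (x (k + 1) - xs) (u (k + 1) - us))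
      ≤ Real.sqrt (Hq A M α (x 0 - xs) (u 0 - us)) := by
    apply Real.sqrt_le_sqrt
    have h12 := hsum k
    have h13 : 0 ≤ ∑ j ∈ Finset.range (k + 1), Hq A M α (x j - x (j + 1)) (u j - u (j + 1)) :=
      Finset.sum_nonneg fun j _ => hρ0 j
    linarith
  have f5 : Real.sqrt (Hq A M α (x 0 - xs) (u 0 - us)) * Real.sqrt α
      ≤ vnorm (u 0 - us - α • (A *ᵥ (x 0 - xs)))
        + pnorm (α • M - α ^ 2 • (Aᵀ * A)) (x 0 - xs) := by
    have hq2 := Hq_decomp A M α hα (x 0 - xs) (u 0 - us)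
    have ht0 := hMpsd.dotProduct_mulVec_nonneg (x 0 - xs)
    rw [star_trivial] at ht0
    have hmat : (α • M - α ^ 2 • (Aᵀ * A)) = α • (M - α • (Aᵀ * A)) := by
      rw [smul_sub, smul_smul, ← sq]
    have hdd2 : (pnorm (α • M - α ^ 2 • (Aᵀ * A)) (x 0 - xs)) ^ 2
        = α * ((x 0 - xs) ⬝ᵥ ((M - α • (Aᵀ * A)) *ᵥ (x 0 - xs))) := by
      rw [pnorm, hmat, Matrix.smul_mulVec, dotProduct_smul, smul_eq_mul,
        Real.sq_sqrt (mul_nonneg hα.le ht0)]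
    have haa2 : (vnorm (u 0 - us - α • (A *ᵥ (x 0 - xs)))) ^ 2
        = (u 0 - us - α • (A *ᵥ (x 0 - xs))) ⬝ᵥ (u 0 - us - α • (A *ᵥ (x 0 - xs))) :=
      vnorm_sq' _
    have hσα : Hq A M α (x 0 - xs) (u 0 - us) * α
        = (vnorm (u 0 - us - α • (A *ᵥ (x 0 - xs)))) ^ 2
          + (pnorm (α • M - α ^ 2 • (Aᵀ * A)) (x 0 - xs)) ^ 2 := by
      rw [haa2, hdd2, hq2]
      field_simp
    have haan : 0 ≤ vnorm (u 0 - us - α • (A *ᵥ (x 0 - xs))) := vnorm_nonneg' _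
    have hddn : 0 ≤ pnorm (α • M - α ^ 2 • (Aᵀ * A)) (x 0 - xs) := Real.sqrt_nonneg _
    have h12 : Hq A M α (x 0 - xs) (u 0 - us) * α
        ≤ (vnorm (u 0 - us - α • (A *ᵥ (x 0 - xs)))
            + pnorm (α • M - α ^ 2 • (Aᵀ * A)) (x 0 - xs)) ^ 2 := by
      nlinarith [mul_nonneg haan hddn]
    have h13 := Real.sqrt_le_sqrt h12
    rwa [Real.sqrt_mul (hσ0 0), Real.sqrt_sq (by positivity)] at h13
  -- final assembly
  set aa := vnorm (u 0 - us - α • (A *ᵥ (x 0 - xs))) with haadef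
  set dd := pnorm (α • M - α ^ 2 • (Aᵀ * A)) (x 0 - xs) with hdddef
  set vus := vnorm us with hvusdef
  set eN := vnorm Ek with heNdef
  set r := Real.sqrt (Hq A M α (x k - x (k + 1)) (u k - u (k + 1))) with hrdef
  set s1 := Real.sqrt (Hq A M α (x (k + 1) - xs) (u (k + 1) - us)) with hs1def
  set s0 := Real.sqrt (Hq A M α (x 0 - xs) (u 0 - us)) with hs0def
  set sk := Real.sqrt ((k : ℝ) + 1) with hskdef
  set sα := Real.sqrt α with hsadef
  have hsk : 0 < sk := Real.sqrt_pos.mpr (by positivity)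
  have hsα : 0 < sα := Real.sqrt_pos.mpr hα
  have hα2 : sα ^ 2 = α := Real.sq_sqrt hα.le
  have hr : 0 ≤ r := Real.sqrt_nonneg _
  have hs1n : 0 ≤ s1 := Real.sqrt_nonneg _
  have hs0n : 0 ≤ s0 := Real.sqrt_nonneg _
  have heN : 0 ≤ eN := vnorm_nonneg' _
  have hvus : 0 ≤ vus := vnorm_nonneg' _
  have haan : 0 ≤ aa := vnorm_nonneg' _
  have hddn : 0 ≤ dd := Real.sqrt_nonneg _
  have hc : 0 < α * sk := mul_pos hα hsk
  rw [div_mul_eq_mul_div, one_mul, le_div_iff₀ hc]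
  have P1 : eN * sα * sk ≤ s0 := le_trans (mul_le_mul_of_nonneg_right f2 hsk.le) f4
  have P2 : eN * (α * sk) ≤ aa + dd := by
    have q1 : eN * sα * sk * sα ≤ s0 * sα := mul_le_mul_of_nonneg_right P1 hsα.le
    have e7 : eN * (α * sk) = eN * sα * sk * sα := by rw [← hα2]; ring
    rw [e7]
    exact le_trans q1 f5
  have P3 : r * s1 * (α * sk) ≤ (aa + dd) ^ 2 := by
    have q2 : r * sk * (s1 * α) ≤ s0 * (s1 * α) :=
      mul_le_mul_of_nonneg_right f4 (by positivity)
    have q3 : s0 * (s1 * α) ≤ s0 * (s0 * α) :=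
      mul_le_mul_of_nonneg_left (mul_le_mul_of_nonneg_right f3 hα.le) hs0n
    have q4 : s0 * (s0 * α) = (s0 * sα) ^ 2 := by rw [← hα2]; ring
    have q5 : (s0 * sα) ^ 2 ≤ (aa + dd) ^ 2 :=
      pow_le_pow_left₀ (mul_nonneg hs0n hsα.le) f5 2
    calc r * s1 * (α * sk) = r * sk * (s1 * α) := by ring
      _ ≤ s0 * (s1 * α) := q2
      _ ≤ s0 * (s0 * α) := q3
      _ = (s0 * sα) ^ 2 := q4
      _ ≤ (aa + dd) ^ 2 := q5
  have hLv : 0 ≤ L + vus := by linarith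
  have q6 := mul_le_mul_of_nonneg_right f1 hc.le
  have q7 : (L * eN + r * s1 + vus * eN) * (α * sk)
      = (L + vus) * (eN * (α * sk)) + r * s1 * (α * sk) := by ring
  have q8 : (L + vus) * (eN * (α * sk)) ≤ (L + vus) * (aa + dd) :=
    mul_le_mul_of_nonneg_left P2 hLv
  have q9 : (L + vus) * (aa + dd) + (aa + dd) ^ 2 ≤ (aa + vus + L + dd) ^ 2 := by
    nlinarith [haan, hddn, hL, hvus]
  calc (g (A *ᵥ x (k + 1) - b) - g (A *ᵥ xs - b)) * (α * sk)
      ≤ (L * eN + r * s1 + vus * eN) * (α * sk) := q6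
    _ = (L + vus) * (eN * (α * sk)) + r * s1 * (α * sk) := q7
    _ ≤ (L + vus) * (aa + dd) + (aa + dd) ^ 2 := by linarith [q8, P3]
    _ ≤ (aa + vus + L + dd) ^ 2 := q9
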